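/- (Upper-solution blow-up comparison.) Let 0 < α < 1, c > 0, T > 0, and let F ∈ C¹([0,T]) satisfy F(0) > 0 and the differential inequality ∂^α_{+0,t} F(t) ≥ c F(t)² for all t ∈ (0,T]. Then T ≤ (Γ(α+1)/(c F(0)))^{1/α}; in particular F cannot remain finite on any interval [0,T] with T > (Γ(α+1)/(c F(0)))^{1/α}. -/

import Mathlib

open Set MeasureTheory Filter
open intervalIntegral

lemma realBeta {p q t : ℝ} (hp : 0 < p) (hq : 0 < q) (ht : 0 < t) :
    ∫ s in (0:ℝ)..t, s ^ (p-1) * (t - s) ^ (q-1)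
      = Real.Gamma p * Real.Gamma q / Real.Gamma (p+q) * t ^ (p+q-1) := by
  have hC : ∫ x in (0:ℝ)..t, (x:ℂ) ^ ((p:ℂ) - 1) * ((t:ℂ) - x) ^ ((q:ℂ) - 1)
      = (t:ℂ) ^ ((p:ℂ) + q - 1) * Complex.betaIntegral p q :=
    Complex.betaIntegral_scaled p q ht
  have hG : Complex.Gamma p * Complex.Gamma q
      = Complex.Gamma (p + q) * Complex.betaIntegral p q :=
    Complex.Gamma_mul_Gamma_eq_betaIntegral (by simpa using hp) (by simpa using hq)
  have hR : (↑(∫ s in (0:ℝ)..t, s ^ (p-1) * (t - s) ^ (q-1)) : ℂ)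
      = ∫ x in (0:ℝ)..t, (x:ℂ) ^ ((p:ℂ) - 1) * ((t:ℂ) - x) ^ ((q:ℂ) - 1) := by
    rw [← intervalIntegral.integral_ofReal]
    refine intervalIntegral.integral_congr fun x hx => ?_
    rw [uIcc_of_le ht.le] at hx
    push_cast
    rw [Complex.ofReal_cpow hx.1, Complex.ofReal_cpow (by linarith [hx.2] : (0:ℝ) ≤ t - x)]
    push_cast
    ring
  have hGne : Complex.Gamma (p+q) ≠ 0 := by
    rw [show ((p:ℂ)+q) = ((p+q:ℝ):ℂ) by push_cast; ring, Complex.Gamma_ofReal]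
    exact_mod_cast (Real.Gamma_pos_of_pos (by linarith)).ne'
  have hβ : Complex.betaIntegral p q
      = Complex.Gamma p * Complex.Gamma q / Complex.Gamma (p+q) := by
    field_simp [hG]
    rw [hG]; ring
  have := hR.trans (hC.trans (by rw [hβ]))
  have htc : (t:ℂ) ^ ((p:ℂ) + q - 1) = ((t ^ (p+q-1) : ℝ) : ℂ) := by
    rw [Complex.ofReal_cpow ht.le]; push_cast; ring_nf
  rw [htc, show ((p:ℂ)) = ((p:ℝ):ℂ) from rfl, show ((q:ℂ)) = ((q:ℝ):ℂ) from rfl,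
    Complex.Gamma_ofReal, Complex.Gamma_ofReal,
    show ((p:ℝ):ℂ) + ((q:ℝ):ℂ) = ((p+q:ℝ):ℂ) by push_cast; ring, Complex.Gamma_ofReal] at this
  have h2 : ∫ s in (0:ℝ)..t, s ^ (p-1) * (t - s) ^ (q-1)
      = t ^ (p+q-1) * (Real.Gamma p * Real.Gamma q / Real.Gamma (p+q)) := by
    exact_mod_cast this
  rw [h2]; ring

/-- Log-convexity interpolation: `Γ(x + θ) ≤ Γ(x)^(1-θ) * Γ(x+1)^θ` for `x > 0`, `θ ∈ [0,1]`. -/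
lemma gamma_interp {x θ : ℝ} (hx : 0 < x) (hθ0 : 0 ≤ θ) (hθ1 : θ ≤ 1) :
    Real.Gamma (x + θ) ≤ Real.Gamma x ^ (1 - θ) * Real.Gamma (x+1) ^ θ := by
  have h1 : (0:ℝ) < x + 1 := by linarith
  have hxθ : 0 < x + θ := by linarith
  have key := Real.convexOn_log_Gamma.2 (mem_Ioi.mpr hx) (mem_Ioi.mpr h1)
    (by linarith : (0:ℝ) ≤ 1 - θ) hθ0 (by ring)
  have hcomb : (1 - θ) • x + θ • (x+1) = x + θ := by simp [smul_eq_mul]; ring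
  rw [hcomb] at key
  simp only [Function.comp_apply, smul_eq_mul] at key
  have g1 : 0 < Real.Gamma x := Real.Gamma_pos_of_pos hx
  have g2 : 0 < Real.Gamma (x+1) := Real.Gamma_pos_of_pos h1
  have g3 : 0 < Real.Gamma (x+θ) := Real.Gamma_pos_of_pos hxθ
  calc Real.Gamma (x + θ) = Real.exp (Real.log (Real.Gamma (x+θ))) := (Real.exp_log g3).symm
  _ ≤ Real.exp ((1-θ) * Real.log (Real.Gamma x) + θ * Real.log (Real.Gamma (x+1))) :=
      Real.exp_le_exp.mpr key
  _ = Real.Gamma x ^ (1 - θ) * Real.Gamma (x+1) ^ θ := by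
      rw [Real.exp_add, Real.rpow_def_of_pos g1, Real.rpow_def_of_pos g2,
        mul_comm (Real.log _), mul_comm (Real.log _)]

/-- `Γ(α+1) ≥ (α+1)^(α-1)` for `0 ≤ α ≤ 1`. -/
lemma gamma_lower {α : ℝ} (h0 : 0 < α) (h1 : α < 1) :
    (α + 1) ^ (α - 1) ≤ Real.Gamma (α + 1) := by
  have h := gamma_interp (x := α + 1) (θ := 1 - α) (by linarith) (by linarith) (by linarith)
  rw [show α + 1 + (1 - α) = 2 by ring, Real.Gamma_two] at h
  have g1 : 0 < Real.Gamma (α+1) := Real.Gamma_pos_of_pos (by linarith)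
  have hEq : Real.Gamma (α + 1 + 1) = (α+1) * Real.Gamma (α+1) :=
    Real.Gamma_add_one (by linarith)
  rw [hEq] at h
  have hα1 : (0:ℝ) < α + 1 := by linarith
  rw [Real.mul_rpow hα1.le g1.le, show (1 : ℝ) - (1 - α) = α by ring] at h
  -- h : 1 ≤ Γ(α+1)^α * ((α+1)^(1-α) * Γ(α+1)^(1-α))
  have hrw : Real.Gamma (α+1) ^ α * ((α+1) ^ (1-α) * Real.Gamma (α+1) ^ (1-α))
      = (α+1) ^ (1-α) * Real.Gamma (α+1) := by
    rw [mul_comm (Real.Gamma (α+1) ^ α), mul_assoc, ← Real.rpow_add g1,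
      show (1:ℝ) - α + α = 1 by ring, Real.rpow_one]
  rw [hrw] at h
  have hpow : (0:ℝ) < (α+1) ^ (1-α) := Real.rpow_pos_of_pos hα1 _
  rw [show α - 1 = -(1-α) by ring, Real.rpow_neg hα1.le, ← one_div, div_le_iff₀ hpow,
    mul_comm]
  exact h

/-- Key Gamma inequality: `Γ((m+1)α+1) ≤ (m+1) Γ(α+1) Γ(mα+1)`. -/
lemma gamma_key {α : ℝ} (h0 : 0 < α) (h1 : α < 1) (m : ℕ) :
    Real.Gamma (((m:ℝ)+1)*α + 1) ≤ ((m:ℝ)+1) * Real.Gamma (α+1) * Real.Gamma ((m:ℝ)*α+1) := by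
  rcases Nat.eq_zero_or_pos m with hm | hm
  · subst hm; simp [Real.Gamma_one]
  have hm1 : (1:ℝ) ≤ (m:ℝ) := by exact_mod_cast hm
  set a : ℝ := (m:ℝ) * α with ha
  have hapos : 0 < a := by positivity
  have ha1 : 0 < a + 1 := by linarith
  have step1 : Real.Gamma (a + 1 + α) ≤ Real.Gamma (a+1) * (a+1) ^ α := by
    have h := gamma_interp (x := a + 1) (θ := α) ha1 h0.le h1.le
    have hEq : Real.Gamma (a + 1 + 1) = (a+1) * Real.Gamma (a+1) :=
      Real.Gamma_add_one (by linarith)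
    rw [hEq, Real.mul_rpow ha1.le (Real.Gamma_pos_of_pos ha1).le] at h
    calc Real.Gamma (a+1+α) ≤ Real.Gamma (a+1) ^ (1-α) * ((a+1)^α * Real.Gamma (a+1) ^ α) := h
    _ = Real.Gamma (a+1) ^ (1-α) * Real.Gamma (a+1) ^ α * (a+1)^α := by ring
    _ = Real.Gamma (a+1) * (a+1)^α := by
        rw [← Real.rpow_add (Real.Gamma_pos_of_pos ha1), show (1:ℝ)-α+α = 1 by ring,
          Real.rpow_one]
  have step2 : (a+1) ^ α ≤ ((m:ℝ)+1) * Real.Gamma (α+1) := by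
    have hg := gamma_lower h0 h1
    have e1 : (a+1) ^ α ≤ ((m:ℝ)+1) ^ α := by
      apply Real.rpow_le_rpow (by linarith) _ h0.le
      have : α ≤ 1 := h1.le
      nlinarith
    have e2 : (α+1) ^ (1-α) ≤ ((m:ℝ)+1) ^ (1-α) := by
      apply Real.rpow_le_rpow (by linarith) (by linarith) (by linarith)
    have hm1' : (0:ℝ) < (m:ℝ)+1 := by linarith
    calc (a+1)^α ≤ ((m:ℝ)+1)^α := e1
    _ = ((m:ℝ)+1) * ((m:ℝ)+1)^(α-1) := by
        rw [show α = 1 + (α-1) by ring, Real.rpow_add hm1', Real.rpow_one]; ring_nf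
    _ ≤ ((m:ℝ)+1) * (α+1)^(α-1) := by
        refine mul_le_mul_of_nonneg_left ?_ hm1'.le
        exact Real.rpow_le_rpow_of_nonpos (by linarith) (by linarith) (by linarith)
    _ ≤ ((m:ℝ)+1) * Real.Gamma (α+1) := mul_le_mul_of_nonneg_left hg hm1'.le
  calc Real.Gamma (((m:ℝ)+1)*α + 1) = Real.Gamma (a + 1 + α) := by rw [ha]; ring_nf
  _ ≤ Real.Gamma (a+1) * (a+1)^α := step1
  _ ≤ Real.Gamma (a+1) * (((m:ℝ)+1) * Real.Gamma (α+1)) := by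
      exact mul_le_mul_of_nonneg_left step2 (Real.Gamma_pos_of_pos ha1).le
  _ = ((m:ℝ)+1) * Real.Gamma (α+1) * Real.Gamma ((m:ℝ)*α+1) := by rw [ha]; ring

lemma sq_sum_ge (x : ℝ) (hx : 0 ≤ x) (N : ℕ) :
    ∑ m ∈ Finset.range (N+1), ((m:ℝ)+1) * x^m ≤ (∑ n ∈ Finset.range (N+1), x^n)^2 := by
  have hprod : (∑ n ∈ Finset.range (N+1), x^n)^2
      = ∑ p ∈ Finset.range (N+1) ×ˢ Finset.range (N+1), x^(p.1+p.2) := by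
    rw [sq, Finset.sum_mul_sum, Finset.sum_product]
    exact (Finset.sum_congr rfl fun i _ => Finset.sum_congr rfl fun j _ =>
      (pow_add x i j)).symm
  have hT : ∑ m ∈ Finset.range (N+1), ((m:ℝ)+1) * x^m
      = ∑ p ∈ (Finset.range (N+1)).biUnion (fun m => Finset.HasAntidiagonal.antidiagonal m),
          x^(p.1+p.2) := by
    rw [Finset.sum_biUnion]
    · refine Finset.sum_congr rfl fun m hm => ?_
      rw [Finset.sum_congr rfl (fun p hp => by
        rw [Finset.HasAntidiagonal.mem_antidiagonal.mp hp] : ∀ p ∈ Finset.HasAntidiagonal.antidiagonal m,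
          x^(p.1+p.2) = x^m),
        Finset.sum_const, Finset.Nat.card_antidiagonal, nsmul_eq_mul]
      push_cast; ring
    · intro a ha b hb hab
      simp only [Finset.disjoint_left]
      intro p hpa hpb
      exact hab (by rw [← Finset.HasAntidiagonal.mem_antidiagonal.mp hpa,
        ← Finset.HasAntidiagonal.mem_antidiagonal.mp hpb])
  rw [hprod, hT]
  apply Finset.sum_le_sum_of_subset_of_nonneg
  · intro p hp
    simp only [Finset.mem_biUnion, Finset.HasAntidiagonal.mem_antidiagonal, Finset.mem_range] at hp
    obtain ⟨m, hm, hpm⟩ := hp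
    rw [Finset.mem_product, Finset.mem_range, Finset.mem_range]
    omega
  · intro p _ _
    positivity

lemma fubini_key {α b M : ℝ} (h0 : 0 < α) (h1 : α < 1) (hb : 0 < b) (hM : 0 ≤ M)
    {g : ℝ → ℝ} (hgm : Measurable g) (hgb : ∀ u ∈ Icc (0:ℝ) b, |g u| ≤ M) :
    IntegrableOn (fun s => (b - s) ^ (α-1) * ∫ u in (0:ℝ)..s, (s-u) ^ (-α) * g u)
      (Ioc 0 b) ∧
    ∫ s in (0:ℝ)..b, (b - s) ^ (α-1) * ∫ u in (0:ℝ)..s, (s-u) ^ (-α) * g u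
      = Real.Gamma α * Real.Gamma (1-α) * ∫ u in (0:ℝ)..b, g u := by
  have hα1 : (-1:ℝ) < -α := by linarith
  have hα2 : (-1:ℝ) < α - 1 := by linarith
  set μ := volume.restrict (Ioc (0:ℝ) b) with hμdef
  set φ : ℝ × ℝ → ℝ := fun p => (b - p.1) ^ (α-1) * ((p.1 - p.2) ^ (-α) * g p.2) with hφdef
  set S : Set (ℝ × ℝ) := {p | 0 < p.2 ∧ p.2 ≤ p.1} with hSdef
  have hSm : MeasurableSet S :=
    (measurableSet_lt measurable_const measurable_snd).inter
      (measurableSet_le measurable_snd measurable_fst)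
  have hφm : Measurable φ := by fun_prop
  set fI : ℝ × ℝ → ℝ := S.indicator φ with hfIdef
  have hfm : Measurable fI := hφm.indicator hSm
  -- pointwise slice description
  have hslice : ∀ s u : ℝ, fI (s, u)
      = (Ioc 0 s).indicator (fun v => (b - s) ^ (α-1) * ((s - v) ^ (-α) * g v)) u := by
    intro s u
    simp only [hfIdef, hφdef, hSdef, Set.indicator_apply, Set.mem_setOf_eq, Set.mem_Ioc]
  -- kernel integrability
  have hker : ∀ s : ℝ, 0 ≤ s → IntegrableOn (fun u => (s-u) ^ (-α)) (Ioc 0 s) volume := by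
    intro s hs
    have h := ((intervalIntegrable_rpow' (a := 0) (b := s) hα1).comp_sub_left s).symm
    simp only [sub_zero, sub_self] at h
    exact (intervalIntegrable_iff_integrableOn_Ioc_of_le hs).mp h
  have hkerb : IntegrableOn (fun s => (b-s) ^ (α-1)) (Ioc 0 b) volume := by
    have h := ((intervalIntegrable_rpow' (a := 0) (b := b) hα2).comp_sub_left b).symm
    simp only [sub_zero, sub_self] at h
    exact (intervalIntegrable_iff_integrableOn_Ioc_of_le hb.le).mp h
  -- inner integrand integrable
  have hInner : ∀ s ∈ Ioc (0:ℝ) b, IntegrableOn (fun u => (s-u) ^ (-α) * g u)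
      (Ioc 0 s) volume := by
    intro s hs
    have hbd : ∀ᵐ u ∂(volume.restrict (Ioc (0:ℝ) s)), ‖g u‖ ≤ M := by
      filter_upwards [self_mem_ae_restrict (measurableSet_Ioc :
        MeasurableSet (Ioc (0:ℝ) s))] with u hu
      exact (Real.norm_eq_abs _).le.trans_eq' rfl |>.trans
        (hgb u ⟨hu.1.le, hu.2.trans hs.2⟩)
    have := (hker s hs.1.le).bdd_mul (hgm.aestronglyMeasurable) hbd
    exact this.congr (Filter.Eventually.of_forall fun u => mul_comm _ _)
  -- kernel integral value
  have hK : ∀ s ∈ Ioc (0:ℝ) b, ∫ u in Ioc (0:ℝ) s, (s-u) ^ (-α) ∂volume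
      = s ^ (1-α) / (1-α) := by
    intro s hs
    rw [← integral_of_le hs.1.le,
      integral_comp_sub_left (fun x => x ^ (-α)) s, sub_self, sub_zero,
      integral_rpow (Or.inl hα1)]
    rw [Real.zero_rpow (by linarith : -α + 1 ≠ 0)]
    norm_num
    ring_nf
  -- slice integrability over μ
  have hsub : ∀ s, s ∈ Ioc (0:ℝ) b → Ioc (0:ℝ) s ∩ Ioc 0 b = Ioc 0 s := fun s hs =>
    Set.inter_eq_self_of_subset_left (Ioc_subset_Ioc_right hs.2)
  have hslice_int : ∀ s ∈ Ioc (0:ℝ) b, Integrable (fun u => fI (s, u)) μ := by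
    intro s hs
    have : (fun u => fI (s, u)) = (Ioc 0 s).indicator
        (fun v => (b - s) ^ (α-1) * ((s - v) ^ (-α) * g v)) := funext fun u => hslice s u
    rw [this, hμdef, integrable_indicator_iff measurableSet_Ioc, IntegrableOn,
      Measure.restrict_restrict measurableSet_Ioc, hsub s hs]
    exact ((hInner s hs).const_mul _)
  -- bound for the norm integral
  set C : ℝ := M * (b ^ (1-α) / (1-α)) with hCdef
  have hnormbd : ∀ s ∈ Ioc (0:ℝ) b, ∫ u, ‖fI (s, u)‖ ∂μ ≤ (b - s) ^ (α-1) * C := by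
    intro s hs
    have hbs : (0:ℝ) ≤ (b - s) ^ (α-1) := Real.rpow_nonneg (by linarith [hs.2]) _
    have e1 : ∫ u, ‖fI (s, u)‖ ∂μ
        = ∫ u in Ioc (0:ℝ) s, ‖(b - s) ^ (α-1) * ((s - u) ^ (-α) * g u)‖ ∂volume := by
      have : (fun u => ‖fI (s, u)‖) = (Ioc 0 s).indicator
          (fun v => ‖(b - s) ^ (α-1) * ((s - v) ^ (-α) * g v)‖) := by
        funext u
        rw [hslice s u, norm_indicator_eq_indicator_norm]
      rw [this, hμdef, MeasureTheory.integral_indicator measurableSet_Ioc,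
        Measure.restrict_restrict measurableSet_Ioc, hsub s hs]
    rw [e1]
    have e2 : ∫ u in Ioc (0:ℝ) s, ‖(b - s) ^ (α-1) * ((s - u) ^ (-α) * g u)‖ ∂volume
        ≤ ∫ u in Ioc (0:ℝ) s, (b - s) ^ (α-1) * ((s - u) ^ (-α) * M) ∂volume := by
      apply setIntegral_mono_on
      · exact (((hInner s hs).const_mul _).norm)
      · exact (((hker s hs.1.le).mul_const M).const_mul _)
      · exact measurableSet_Ioc
      · intro u hu
        have h1 : (0:ℝ) ≤ (s - u) ^ (-α) := Real.rpow_nonneg (by linarith [hu.2]) _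
        rw [norm_mul, norm_mul, Real.norm_eq_abs, Real.norm_eq_abs, Real.norm_eq_abs,
          abs_of_nonneg hbs, abs_of_nonneg h1]
        have := hgb u ⟨hu.1.le, hu.2.trans hs.2⟩
        have := mul_le_mul_of_nonneg_left this h1
        nlinarith [this, hbs]
    refine e2.trans ?_
    rw [MeasureTheory.integral_const_mul, MeasureTheory.integral_mul_const, hK s hs]
    have h1α : (0:ℝ) < 1 - α := by linarith
    have hsb : s ^ (1-α) ≤ b ^ (1-α) := Real.rpow_le_rpow hs.1.le hs.2 h1α.le
    refine mul_le_mul_of_nonneg_left ?_ hbs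
    rw [hCdef]
    calc s ^ (1-α) / (1-α) * M = M * (s ^ (1-α) / (1-α)) := by ring
    _ ≤ M * (b ^ (1-α) / (1-α)) := by
        apply mul_le_mul_of_nonneg_left _ hM
        gcongr
  -- product integrability
  have hprod : Integrable fI (μ.prod μ) := by
    rw [MeasureTheory.integrable_prod_iff hfm.aestronglyMeasurable]
    constructor
    · filter_upwards [self_mem_ae_restrict (measurableSet_Ioc :
        MeasurableSet (Ioc (0:ℝ) b))] with s hs
      exact hslice_int s hs
    · refine Integrable.mono' (hkerb.mul_const C) ?meas ?bd
      case meas =>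
        exact (hfm.aestronglyMeasurable.norm.integral_prod_right')
      case bd =>
        filter_upwards [self_mem_ae_restrict (measurableSet_Ioc :
          MeasurableSet (Ioc (0:ℝ) b))] with s hs
        rw [Real.norm_eq_abs, abs_of_nonneg (integral_nonneg fun u => norm_nonneg _)]
        exact hnormbd s hs
  have hswap : ∫ s, (∫ u, fI (s, u) ∂μ) ∂μ = ∫ u, (∫ s, fI (s, u) ∂μ) ∂μ :=
    MeasureTheory.integral_integral_swap hprod
  have hL : ∀ s ∈ Ioc (0:ℝ) b, (∫ u, fI (s, u) ∂μ)
      = (b - s) ^ (α-1) * ∫ u in (0:ℝ)..s, (s-u) ^ (-α) * g u := by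
    intro s hs
    have e : (fun u => fI (s, u)) = (Ioc 0 s).indicator
        (fun v => (b - s) ^ (α-1) * ((s - v) ^ (-α) * g v)) := funext fun u => hslice s u
    rw [e, hμdef, MeasureTheory.integral_indicator measurableSet_Ioc,
      Measure.restrict_restrict measurableSet_Ioc, hsub s hs,
      ← integral_of_le hs.1.le, intervalIntegral.integral_const_mul]
  have hIfun : Integrable (fun s => ∫ u, fI (s, u) ∂μ) μ := hprod.integral_prod_left
  have hint1 : IntegrableOn
      (fun s => (b - s) ^ (α-1) * ∫ u in (0:ℝ)..s, (s-u) ^ (-α) * g u) (Ioc 0 b) volume := by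
    refine hIfun.congr ?_
    filter_upwards [self_mem_ae_restrict (measurableSet_Ioc :
      MeasurableSet (Ioc (0:ℝ) b))] with s hs
    exact hL s hs
  have hR : ∀ᵐ u ∂μ, (∫ s, fI (s, u) ∂μ)
      = Real.Gamma α * Real.Gamma (1-α) * g u := by
    have hne : ∀ᵐ u : ℝ ∂μ, u ≠ b := by
      refine ae_restrict_of_ae ?_
      rw [ae_iff]
      simp only [ne_eq, not_not]
      have : {a : ℝ | a = b} = {b} := by ext x; simp
      rw [this]
      exact measure_singleton b
    filter_upwards [self_mem_ae_restrict (measurableSet_Ioc :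
      MeasurableSet (Ioc (0:ℝ) b)), hne] with u hu hub
    have hu0 : (0:ℝ) < u := hu.1
    have hub' : u < b := lt_of_le_of_ne hu.2 hub
    have e : ∀ s, fI (s, u) = (Ici u).indicator
        (fun s => ((b - s) ^ (α-1) * (s - u) ^ (-α)) * g u) s := by
      intro s
      by_cases h : u ≤ s
      · have h1 : (s, u) ∈ S := ⟨hu0, h⟩
        have h2 : s ∈ Ici u := h
        rw [hfIdef, Set.indicator_of_mem h1, Set.indicator_of_mem h2, hφdef]
        ring
      · have h1 : (s, u) ∉ S := fun hc => h hc.2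
        have h2 : s ∉ Ici u := h
        rw [hfIdef, Set.indicator_of_notMem h1, Set.indicator_of_notMem h2]
    have hIcc : Ici u ∩ Ioc 0 b = Icc u b := by
      ext x
      simp only [Set.mem_inter_iff, Set.mem_Ici, Set.mem_Ioc, Set.mem_Icc]
      exact ⟨fun ⟨h1, h2⟩ => ⟨h1, h2.2⟩, fun ⟨h1, h2⟩ => ⟨h1, lt_of_lt_of_le hu0 h1, h2⟩⟩
    have hbeta : ∫ s in u..b, (b - s) ^ (α-1) * (s - u) ^ (-α)
        = Real.Gamma α * Real.Gamma (1-α) := by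
      have hcomp := integral_comp_add_left
        (fun s => (b - s) ^ (α-1) * (s - u) ^ (-α)) u (a := 0) (b := b - u)
      simp only [add_zero, add_sub_cancel] at hcomp
      rw [← hcomp]
      have hcong : ∫ x in (0:ℝ)..(b-u), (b - (u + x)) ^ (α-1) * (u + x - u) ^ (-α)
          = ∫ x in (0:ℝ)..(b-u), x ^ ((1-α)-1) * ((b-u) - x) ^ ((α)-1) := by
        refine intervalIntegral.integral_congr fun x hx => ?_
        rw [show b - (u + x) = (b-u) - x by ring, show u + x - u = x by ring,
          show (1-α)-1 = -α by ring]
        ring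
      rw [hcong, realBeta (by linarith) h0 (by linarith : (0:ℝ) < b - u)]
      rw [show (1-α) + α = 1 by ring, Real.Gamma_one]
      norm_num
      ring
    calc (∫ s, fI (s, u) ∂μ)
        = ∫ s, (Ici u).indicator
            (fun s => ((b - s) ^ (α-1) * (s - u) ^ (-α)) * g u) s ∂μ := by
          exact MeasureTheory.integral_congr_ae (Filter.Eventually.of_forall e)
    _ = ∫ s in Icc u b, ((b - s) ^ (α-1) * (s - u) ^ (-α)) * g u := by
          rw [hμdef, MeasureTheory.integral_indicator measurableSet_Ici,
            Measure.restrict_restrict measurableSet_Ici, hIcc]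
    _ = ∫ s in Ioc u b, ((b - s) ^ (α-1) * (s - u) ^ (-α)) * g u := by
          rw [MeasureTheory.integral_Icc_eq_integral_Ioc]
    _ = (∫ s in u..b, (b - s) ^ (α-1) * (s - u) ^ (-α)) * g u := by
          rw [← integral_of_le hub'.le, intervalIntegral.integral_mul_const]
    _ = Real.Gamma α * Real.Gamma (1-α) * g u := by rw [hbeta]
  constructor
  · exact hint1
  · calc ∫ s in (0:ℝ)..b, (b - s) ^ (α-1) * ∫ u in (0:ℝ)..s, (s-u) ^ (-α) * g u
        = ∫ s in Ioc (0:ℝ) b, ((b - s) ^ (α-1) * ∫ u in (0:ℝ)..s, (s-u) ^ (-α) * g u)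
            ∂volume := integral_of_le hb.le
    _ = ∫ s, (∫ u, fI (s, u) ∂μ) ∂μ := by
          rw [hμdef]
          exact setIntegral_congr_fun measurableSet_Ioc fun s hs => (hL s hs).symm
    _ = ∫ u, (∫ s, fI (s, u) ∂μ) ∂μ := hswap
    _ = ∫ u, Real.Gamma α * Real.Gamma (1-α) * g u ∂μ :=
          MeasureTheory.integral_congr_ae hR
    _ = Real.Gamma α * Real.Gamma (1-α) * ∫ u, g u ∂μ :=
          MeasureTheory.integral_const_mul _ _
    _ = Real.Gamma α * Real.Gamma (1-α) * ∫ u in (0:ℝ)..b, g u := by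
          rw [hμdef, ← integral_of_le hb.le]

/-- Caputo fractional derivative of order `α` at base point `0`. -/
noncomputable def caputo (α : ℝ) (f : ℝ → ℝ) (t : ℝ) : ℝ :=
  (1 / Real.Gamma (1 - α)) * ∫ s in (0:ℝ)..t, (t - s) ^ (-α) * deriv f s

theorem caputo_blowup_comparison (α c T : ℝ) (hα : 0 < α ∧ α < 1) (hc : 0 < c) (hT : 0 < T)
    (F : ℝ → ℝ)
    (hd : ∀ t ∈ Set.Icc (0:ℝ) T, DifferentiableAt ℝ F t)
    (hd' : ContinuousOn (deriv F) (Set.Icc 0 T))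
    (hF0 : 0 < F 0)
    (hineq : ∀ t ∈ Set.Ioc (0:ℝ) T, c * (F t) ^ 2 ≤ caputo α F t) :
    T ≤ (Real.Gamma (α + 1) / (c * F 0)) ^ (1 / α) := by
  obtain ⟨h0, h1⟩ := hα
  by_contra hcon
  push_neg at hcon
  have hΓα : 0 < Real.Gamma α := Real.Gamma_pos_of_pos h0
  have hΓ1α : 0 < Real.Gamma (1-α) := Real.Gamma_pos_of_pos (by linarith)
  have hΓα1 : 0 < Real.Gamma (α+1) := Real.Gamma_pos_of_pos (by linarith)
  set g := deriv F with hgdef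
  have hgc : ContinuousOn g (Icc 0 T) := hd'
  have hgm : Measurable g := measurable_deriv F
  obtain ⟨M, hM⟩ := isCompact_Icc.exists_bound_of_continuousOn hgc
  have hM' : ∀ u ∈ Icc (0:ℝ) T, |g u| ≤ M := fun u hu => by
    simpa [Real.norm_eq_abs] using hM u hu
  have hM0 : 0 ≤ M := (abs_nonneg _).trans (hM' 0 ⟨le_refl 0, hT.le⟩)
  have hFTC : ∀ b ∈ Ioc (0:ℝ) T, ∫ u in (0:ℝ)..b, g u = F b - F 0 := by
    intro b hb
    apply intervalIntegral.integral_deriv_eq_sub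
    · intro x hx
      rw [uIcc_of_le hb.1.le] at hx
      exact hd x ⟨hx.1, hx.2.trans hb.2⟩
    · refine (hgc.mono fun x hx => ?_).intervalIntegrable
      rw [uIcc_of_le hb.1.le] at hx
      exact ⟨hx.1, hx.2.trans hb.2⟩
  have key : ∀ b ∈ Ioc (0:ℝ) T,
      IntervalIntegrable (fun s => (b - s) ^ (α-1) * caputo α F s) volume 0 b ∧
      ∫ s in (0:ℝ)..b, (b - s) ^ (α-1) * caputo α F s
        = Real.Gamma α * (F b - F 0) := by
    intro b hb
    have hMb : ∀ u ∈ Icc (0:ℝ) b, |g u| ≤ M := fun u hu => hM' u ⟨hu.1, hu.2.trans hb.2⟩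
    obtain ⟨hint, heq⟩ := fubini_key h0 h1 hb.1 hM0 hgm hMb
    have hcap : ∀ s : ℝ, (b - s) ^ (α-1) * caputo α F s
        = (1/Real.Gamma (1-α))
          * ((b - s) ^ (α-1) * ∫ u in (0:ℝ)..s, (s-u) ^ (-α) * g u) := by
      intro s
      simp only [caputo, ← hgdef]
      ring
    constructor
    · rw [intervalIntegrable_iff_integrableOn_Ioc_of_le hb.1.le]
      refine (hint.const_mul (1/Real.Gamma (1-α))).congr ?_
      exact Filter.Eventually.of_forall fun s => (hcap s).symm
    · calc ∫ s in (0:ℝ)..b, (b - s) ^ (α-1) * caputo α F s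
          = ∫ s in (0:ℝ)..b, (1/Real.Gamma (1-α))
            * ((b - s) ^ (α-1) * ∫ u in (0:ℝ)..s, (s-u) ^ (-α) * g u) :=
            intervalIntegral.integral_congr fun s _ => hcap s
      _ = (1/Real.Gamma (1-α)) * ∫ s in (0:ℝ)..b,
            ((b - s) ^ (α-1) * ∫ u in (0:ℝ)..s, (s-u) ^ (-α) * g u) :=
            intervalIntegral.integral_const_mul _ _
      _ = (1/Real.Gamma (1-α)) * (Real.Gamma α * Real.Gamma (1-α) * (F b - F 0)) := by
            rw [heq, hFTC b hb]
      _ = Real.Gamma α * (F b - F 0) := by field_simp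
  have hcapnn : ∀ s ∈ Ioc (0:ℝ) T, 0 ≤ caputo α F s := fun s hs =>
    le_trans (by positivity) (hineq s hs)
  have hcap0 : caputo α F 0 = 0 := by
    simp [caputo]
  have base : ∀ b ∈ Icc (0:ℝ) T, F 0 ≤ F b := by
    intro b hb
    rcases eq_or_lt_of_le hb.1 with h|h
    · rw [← h]
    · have hbIoc : b ∈ Ioc (0:ℝ) T := ⟨h, hb.2⟩
      obtain ⟨hint, heq⟩ := key b hbIoc
      have h2 : 0 ≤ ∫ s in (0:ℝ)..b, (b - s) ^ (α-1) * caputo α F s := by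
        apply intervalIntegral.integral_nonneg h.le
        intro u hu
        rcases eq_or_lt_of_le hu.1 with h3|h3
        · rw [← h3, hcap0, mul_zero]
        · exact mul_nonneg (Real.rpow_nonneg (by linarith [hu.2]) _)
            (hcapnn u ⟨h3, hu.2.trans hbIoc.2⟩)
      rw [heq] at h2
      nlinarith [hΓα]
  set k : ℝ := c * F 0 / Real.Gamma (α+1) with hkdef
  have hk : 0 < k := by positivity
  have main : ∀ N : ℕ, ∀ b ∈ Icc (0:ℝ) T,
      F 0 * ∑ n ∈ Finset.range (N+1), (k * b ^ α)^n ≤ F b := by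
    intro N
    induction N with
    | zero =>
      intro b hb
      simpa using base b hb
    | succ N ih =>
      intro b hb
      rcases eq_or_lt_of_le hb.1 with h|h
      · rw [← h, Real.zero_rpow h0.ne', mul_zero, Finset.sum_range_succ']
        simp only [pow_zero, zero_pow (Nat.succ_ne_zero _)]
        simp
      · have hbIoc : b ∈ Ioc (0:ℝ) T := ⟨h, hb.2⟩
        obtain ⟨hint, heq⟩ := key b hbIoc
        set P : ℝ → ℝ := fun s =>
          c * F 0^2 * ∑ m ∈ Finset.range (N+1), ((m:ℝ)+1) * (k * s ^ α)^m with hPdef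
        have hPcont : Continuous P := by
          apply continuous_const.mul
          apply continuous_finset_sum
          intro m _
          exact continuous_const.mul
            ((continuous_const.mul (Real.continuous_rpow_const h0.le)).pow m)
        have hkerInt : IntervalIntegrable (fun s => (b - s) ^ (α-1)) volume 0 b := by
          have h2 := ((intervalIntegrable_rpow' (a := 0) (b := b)
            (by linarith : (-1:ℝ) < α - 1)).comp_sub_left b).symm
          simpa using h2
        have hintP : IntervalIntegrable (fun s => (b - s) ^ (α-1) * P s) volume 0 b :=
          hkerInt.mul_continuousOn hPcont.continuousOn
        have hmono : ∫ s in (0:ℝ)..b, (b - s) ^ (α-1) * P s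
            ≤ ∫ s in (0:ℝ)..b, (b - s) ^ (α-1) * caputo α F s := by
          apply intervalIntegral.integral_mono_ae_restrict h.le hintP hint
          have hne : ∀ᵐ s ∂(volume.restrict (Icc (0:ℝ) b)), s ≠ 0 := by
            refine ae_restrict_of_ae ?_
            rw [ae_iff]
            simp only [ne_eq, not_not]
            have he : {a : ℝ | a = 0} = {0} := by ext x; simp
            rw [he]
            exact measure_singleton 0
          filter_upwards [self_mem_ae_restrict (measurableSet_Icc :
            MeasurableSet (Icc (0:ℝ) b)), hne] with s hs hs0
          have hs' : s ∈ Ioc (0:ℝ) b := ⟨lt_of_le_of_ne hs.1 (Ne.symm hs0), hs.2⟩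
          have hker : (0:ℝ) ≤ (b - s) ^ (α-1) := Real.rpow_nonneg (by linarith [hs.2]) _
          refine mul_le_mul_of_nonneg_left ?_ hker
          have hFs := ih s ⟨hs.1, hs'.2.trans hbIoc.2⟩
          have hxnn : (0:ℝ) ≤ k * s ^ α := mul_nonneg hk.le (Real.rpow_nonneg hs.1 _)
          have hSnn : (0:ℝ) ≤ ∑ n ∈ Finset.range (N+1), (k * s ^ α)^n :=
            Finset.sum_nonneg fun n _ => pow_nonneg hxnn n
          have hsq : (F 0 * ∑ n ∈ Finset.range (N+1), (k * s ^ α)^n)^2 ≤ (F s)^2 :=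
            pow_le_pow_left₀ (mul_nonneg hF0.le hSnn) hFs 2
          have hcomb := sq_sum_ge (k * s ^ α) hxnn N
          calc P s
              ≤ c * F 0^2 * (∑ n ∈ Finset.range (N+1), (k * s ^ α)^n)^2 :=
                mul_le_mul_of_nonneg_left hcomb (by positivity)
          _ = c * (F 0 * ∑ n ∈ Finset.range (N+1), (k * s ^ α)^n)^2 := by ring
          _ ≤ c * (F s)^2 := mul_le_mul_of_nonneg_left hsq hc.le
          _ ≤ caputo α F s := hineq s ⟨hs'.1, hs'.2.trans hbIoc.2⟩
        have hPval : ∫ s in (0:ℝ)..b, (b - s) ^ (α-1) * P s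
            = ∑ m ∈ Finset.range (N+1), (c * F 0^2 * (((m:ℝ)+1) * k^m)
                * (Real.Gamma (α*(m:ℝ)+1) * Real.Gamma α / Real.Gamma (α*(m:ℝ)+1+α)
                  * b ^ (α*(m:ℝ)+1+α-1))) := by
          have e1 : ∀ s ∈ uIcc (0:ℝ) b, (b - s) ^ (α-1) * P s
              = ∑ m ∈ Finset.range (N+1), (c * F 0^2 * (((m:ℝ)+1) * k^m))
                  * (s ^ (α*(m:ℝ)+1-1) * (b - s) ^ (α-1)) := by
            intro s hs
            rw [uIcc_of_le h.le] at hs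
            simp only [hPdef]
            rw [Finset.mul_sum, Finset.mul_sum]
            apply Finset.sum_congr rfl
            intro m _
            have e2 : (k * s ^ α)^m = k^m * s ^ (α*(m:ℝ)) := by
              rw [mul_pow, ← Real.rpow_natCast (s ^ α) m, ← Real.rpow_mul hs.1]
            rw [e2, show α*(m:ℝ)+1-1 = α*(m:ℝ) by ring]
            ring
          rw [intervalIntegral.integral_congr e1, intervalIntegral.integral_finset_sum]
          · refine Finset.sum_congr rfl fun m _ => ?_
            rw [intervalIntegral.integral_const_mul]
            congr 1
            exact realBeta (by positivity) h0 h
          · intro m _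
            apply IntervalIntegrable.const_mul
            apply hkerInt.continuousOn_mul
            apply ContinuousOn.rpow_const continuousOn_id
            intro x _
            right
            have hmn : (0:ℝ) ≤ α*(m:ℝ) := by positivity
            linarith
        have hterm : ∀ m ∈ Finset.range (N+1),
            Real.Gamma α * (F 0 * (k * b ^ α)^(m+1))
            ≤ c * F 0^2 * (((m:ℝ)+1) * k^m)
              * (Real.Gamma (α*(m:ℝ)+1) * Real.Gamma α / Real.Gamma (α*(m:ℝ)+1+α)
                * b ^ (α*(m:ℝ)+1+α-1)) := by
          intro m _
          have hgk : Real.Gamma (α*(m:ℝ)+1+α)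
              ≤ ((m:ℝ)+1) * Real.Gamma (α+1) * Real.Gamma (α*(m:ℝ)+1) := by
            have h2 := gamma_key h0 h1 m
            rw [show α*(m:ℝ)+1+α = ((m:ℝ)+1)*α+1 by ring,
              show α*(m:ℝ)+1 = (m:ℝ)*α+1 by ring]
            exact h2
          have hΓm1 : 0 < Real.Gamma (α*(m:ℝ)+1) := Real.Gamma_pos_of_pos (by positivity)
          have hΓm2 : 0 < Real.Gamma (α*(m:ℝ)+1+α) := Real.Gamma_pos_of_pos (by positivity)
          have hbα : (k * b ^ α)^(m+1) = k^(m+1) * b ^ (α*(m:ℝ)+1+α-1) := by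
            rw [mul_pow, ← Real.rpow_natCast (b ^ α) (m+1), ← Real.rpow_mul h.le]
            congr 2
            push_cast
            ring
          rw [hbα]
          have hBpos : 0 < b ^ (α*(m:ℝ)+1+α-1) := Real.rpow_pos_of_pos h _
          have hcf : c * F 0 ^ 2 = k * Real.Gamma (α+1) * F 0 := by
            rw [hkdef]
            field_simp
          have e3 : c * F 0^2 * (((m:ℝ)+1) * k^m)
              * (Real.Gamma (α*(m:ℝ)+1) * Real.Gamma α / Real.Gamma (α*(m:ℝ)+1+α)
                * b ^ (α*(m:ℝ)+1+α-1))
              = (c * F 0^2 * ((m:ℝ)+1) * k^m * Real.Gamma (α*(m:ℝ)+1) * Real.Gamma α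
                * b ^ (α*(m:ℝ)+1+α-1)) / Real.Gamma (α*(m:ℝ)+1+α) := by
            ring
          rw [e3, le_div_iff₀ hΓm2, hcf]
          calc Real.Gamma α * (F 0 * (k^(m+1) * b ^ (α*(m:ℝ)+1+α-1)))
              * Real.Gamma (α*(m:ℝ)+1+α)
              = Real.Gamma (α*(m:ℝ)+1+α) * (Real.Gamma α * F 0 * k^(m+1)
                * b ^ (α*(m:ℝ)+1+α-1)) := by ring
          _ ≤ (((m:ℝ)+1) * Real.Gamma (α+1) * Real.Gamma (α*(m:ℝ)+1))
              * (Real.Gamma α * F 0 * k^(m+1) * b ^ (α*(m:ℝ)+1+α-1)) :=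
              mul_le_mul_of_nonneg_right hgk (by positivity)
          _ = k * Real.Gamma (α+1) * F 0 * ((m:ℝ)+1) * k^m
              * Real.Gamma (α*(m:ℝ)+1) * Real.Gamma α * b ^ (α*(m:ℝ)+1+α-1) := by
              rw [pow_succ]
              ring
        have hsum : Real.Gamma α * (F 0 * ∑ m ∈ Finset.range (N+1), (k * b ^ α)^(m+1))
            ≤ ∫ s in (0:ℝ)..b, (b - s) ^ (α-1) * P s := by
          rw [hPval, Finset.mul_sum, Finset.mul_sum]
          exact Finset.sum_le_sum hterm
        have hfinal : Real.Gamma α * (F 0 * ∑ m ∈ Finset.range (N+1), (k * b ^ α)^(m+1))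
            ≤ Real.Gamma α * (F b - F 0) := by
          rw [← heq]
          exact le_trans hsum hmono
        have h5 : F 0 * ∑ m ∈ Finset.range (N+1), (k * b ^ α)^(m+1) ≤ F b - F 0 :=
          le_of_mul_le_mul_left hfinal hΓα
        rw [Finset.sum_range_succ']
        simp only [pow_zero]
        rw [mul_add, mul_one]
        linarith
  have hx1 : 1 < k * T ^ α := by
    have hB : (0:ℝ) < Real.Gamma (α+1) / (c * F 0) := by positivity
    have h3 := Real.rpow_lt_rpow (Real.rpow_nonneg hB.le _) hcon h0
    rw [← Real.rpow_mul hB.le, one_div_mul_cancel h0.ne', Real.rpow_one] at h3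
    calc (1:ℝ) = k * (Real.Gamma (α+1) / (c * F 0)) := by
          rw [hkdef]; field_simp
    _ < k * T ^ α := by exact mul_lt_mul_of_pos_left h3 hk
  obtain ⟨N, hN⟩ := exists_nat_gt (F T / F 0)
  have hmain := main N T ⟨hT.le, le_refl T⟩
  have hsum_ge : ((N:ℝ)+1) ≤ ∑ n ∈ Finset.range (N+1), (k * T ^ α)^n := by
    calc ((N:ℝ)+1) = ∑ _n ∈ Finset.range (N+1), (1:ℝ) := by simp
    _ ≤ ∑ n ∈ Finset.range (N+1), (k * T ^ α)^n :=
        Finset.sum_le_sum fun n _ => one_le_pow₀ hx1.le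
  have h6 : F 0 * ((N:ℝ)+1) ≤ F T :=
    le_trans (mul_le_mul_of_nonneg_left hsum_ge hF0.le) hmain
  have h7 : F T < F 0 * ((N:ℝ)+1) := by
    have h8 := (div_lt_iff₀ hF0).mp hN
    nlinarith [hF0]
  linarith
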